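/- For real numbers 0 < q_1, …, q_d < 1, the d×d matrix M with M_{jj} = 1/q_j + q_j and M_{jk} = 2q_k for j ≠ k is nonsingular; in fact its determinant is positive. -/

import Mathlib

/-- For `0 < q_1, …, q_d < 1`, the `d×d` matrix with diagonal entries
`1/q_j + q_j` and off-diagonal entries `M_{jk} = 2q_k` has positive
determinant; in particular it is nonsingular. -/
theorem harmonic_matrix_det_pos (d : ℕ) (q : Fin d → ℝ)
    (hq0 : ∀ j, 0 < q j) (hq1 : ∀ j, q j < 1) :
    0 < Matrix.det (Matrix.of fun j k : Fin d =>
        if j = k then 1 / q j + q j else 2 * q k)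
    ∧ IsUnit (Matrix.of fun j k : Fin d =>
        if j = k then 1 / q j + q j else 2 * q k) := by 
  set f : Fin d → ℝ := fun j => 1 / q j - q j with hf
  have hfpos : ∀ j, 0 < f j := fun j => by
    have h0 := hq0 j; have h1 := hq1 j
    have : q j < 1 / q j := by
      rw [lt_div_iff₀ h0]
      nlinarith
    simp only [hf]; linarith
  have hD : IsUnit (Matrix.diagonal f).det := by
    rw [Matrix.det_diagonal]
    exact (Finset.prod_pos (fun j _ => hfpos j)).ne'.isUnit
  have hM : (Matrix.of fun j k : Fin d =>
        if j = k then 1 / q j + q j else 2 * q k)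
      = Matrix.diagonal f + Matrix.replicateCol (Fin 1) (fun _ => (1:ℝ)) * Matrix.replicateRow (Fin 1) (fun k => 2 * q k) := by
    ext j k
    by_cases h : j = k <;>
      simp [Matrix.mul_apply, Matrix.diagonal, h, hf] <;> ring
  have hdet : 0 < Matrix.det (Matrix.of fun j k : Fin d =>
        if j = k then 1 / q j + q j else 2 * q k) := by
    rw [hM]; erw [Matrix.det_add_replicateCol_mul_replicateRow (ι := Fin 1) hD]
    have hdD : 0 < (Matrix.diagonal f).det := by
      rw [Matrix.det_diagonal]; exact Finset.prod_pos (fun j _ => hfpos j)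
    apply mul_pos hdD
    have hDinv : (Matrix.diagonal f)⁻¹ = Matrix.diagonal (fun j => (f j)⁻¹) := by
      apply Matrix.inv_eq_right_inv
      rw [Matrix.diagonal_mul_diagonal]
      ext i k
      by_cases h : i = k <;>
        simp [h, Matrix.diagonal, Matrix.one_apply, mul_inv_cancel₀ (hfpos k).ne']
    simp only [Matrix.det_fin_one, hDinv]
    simp [Matrix.mul_apply, Matrix.diagonal]
    have : 0 ≤ ∑ x : Fin d, 2 * q x * (f x)⁻¹ := by
      apply Finset.sum_nonneg
      intro x _
      have := hfpos x
      have := hq0 x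
      positivity
    linarith
  exact ⟨hdet, (Matrix.isUnit_iff_isUnit_det _).2 hdet.ne'.isUnit⟩
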